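/- arXiv:1702.03504 — 4 statements merged into one kernel-verified Lean document; each statement's English description precedes it below -/
import Mathlib

section
/- Let X, Y, Z be independent random variables on a probability space (Ω, ℙ), each uniformly distributed on the interval [0, 1/2]. Let ℓ ≥ 0 be a real number with fractional part {ℓ} ≥ 1/2, and define the random variable T := ⌊1 + X + ℓ⌋ + 1 + Z − (2 + Y). Then for every real number x, ℙ(T ≤ x) = (2 − 2{ℓ}) · ℙ(Z − Y ≤ x − ⌊ℓ⌋) + (2{ℓ} − 1) · ℙ(Z − Y ≤ x − ⌊ℓ⌋ − 1). -/
open MeasureTheory ProbabilityTheory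

lemma iIndepFun_congr_aux {Ω ι : Type*} {β : ι → Type*} [MeasurableSpace Ω]
    {m : ∀ i, MeasurableSpace (β i)} {f g : ∀ i, Ω → β i} {μ : Measure Ω}
    (h : iIndepFun (m := m) f μ) (hfg : ∀ i, f i =ᵐ[μ] g i) : iIndepFun (m := m) g μ := by
  rw [iIndepFun_iff_measure_inter_preimage_eq_mul] at h ⊢
  intro S sets hsets
  have h1 : ∀ i : ι, μ (g i ⁻¹' sets i) = μ (f i ⁻¹' sets i) := fun i =>
    measure_congr (by
      rw [Filter.eventuallyEq_set]
      filter_upwards [hfg i] with ω hω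
      simp [Set.mem_preimage, hω])
  have h2 : μ (⋂ i ∈ S, g i ⁻¹' sets i) = μ (⋂ i ∈ S, f i ⁻¹' sets i) := by
    refine measure_congr ?_
    rw [Filter.eventuallyEq_set]
    have hall : ∀ᵐ ω ∂μ, ∀ i ∈ S, f i ω = g i ω :=
      (ae_ball_iff S.countable_toSet).2 fun i _ => hfg i
    filter_upwards [hall] with ω hω
    simp only [Set.mem_iInter, Set.mem_preimage]
    exact ⟨fun H i hi => (hω i hi) ▸ H i hi, fun H i hi => (hω i hi).symm ▸ H i hi⟩
  rw [h2, h S hsets]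
  exact Finset.prod_congr rfl fun i _ => (h1 i).symm

section Aux
variable {Ω : Type*} [MeasurableSpace Ω] (P : Measure Ω)

lemma unif_lt_aux (W : Ω → ℝ) (hW : pdf.IsUniform W (Set.Icc (0 : ℝ) (1 / 2)) P)
    (c : ℝ) (hc0 : 0 ≤ c) (hc : c ≤ 1/2) :
    P (W ⁻¹' Set.Iio c) = ENNReal.ofReal (2 * c) := by
  have hvol : (volume (Set.Icc (0:ℝ) (1/2))) = ENNReal.ofReal (1/2) := by
    simp [Real.volume_Icc]
  have hns : volume (Set.Icc (0:ℝ) (1/2)) ≠ 0 := by rw [hvol]; positivity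
  have hnt : volume (Set.Icc (0:ℝ) (1/2)) ≠ ⊤ := by rw [hvol]; exact ENNReal.ofReal_ne_top
  rw [hW.measure_preimage hns hnt measurableSet_Iio]
  have : Set.Icc (0:ℝ) (1/2) ∩ Set.Iio c = Set.Ico 0 c := by
    ext y
    simp only [Set.mem_inter_iff, Set.mem_Icc, Set.mem_Iio, Set.mem_Ico]
    constructor
    · rintro ⟨⟨h1, _⟩, h3⟩; exact ⟨h1, h3⟩
    · rintro ⟨h1, h2⟩; exact ⟨⟨h1, by linarith⟩, h2⟩
  rw [this, Real.volume_Ico, hvol, sub_zero,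
    ← ENNReal.ofReal_div_of_pos (by norm_num)]
  congr 1; ring

lemma unif_ge_aux (W : Ω → ℝ) (hW : pdf.IsUniform W (Set.Icc (0 : ℝ) (1 / 2)) P)
    (c : ℝ) (hc0 : 0 ≤ c) (hc : c ≤ 1/2) :
    P (W ⁻¹' Set.Ici c) = ENNReal.ofReal (1 - 2 * c) := by
  have hvol : (volume (Set.Icc (0:ℝ) (1/2))) = ENNReal.ofReal (1/2) := by
    simp [Real.volume_Icc]
  have hns : volume (Set.Icc (0:ℝ) (1/2)) ≠ 0 := by rw [hvol]; positivity
  have hnt : volume (Set.Icc (0:ℝ) (1/2)) ≠ ⊤ := by rw [hvol]; exact ENNReal.ofReal_ne_top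
  rw [hW.measure_preimage hns hnt measurableSet_Ici]
  have : Set.Icc (0:ℝ) (1/2) ∩ Set.Ici c = Set.Icc c (1/2) := by
    ext y
    simp only [Set.mem_inter_iff, Set.mem_Icc, Set.mem_Ici]
    constructor
    · rintro ⟨⟨_, h2⟩, h3⟩; exact ⟨h3, h2⟩
    · rintro ⟨h1, h2⟩; exact ⟨⟨by linarith, h2⟩, h1⟩
  rw [this, Real.volume_Icc, hvol, ← ENNReal.ofReal_div_of_pos (by norm_num)]
  norm_num
  ring_nf

lemma unif_full_aux (W : Ω → ℝ) [IsProbabilityMeasure P]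
    (hW : pdf.IsUniform W (Set.Icc (0 : ℝ) (1 / 2)) P) :
    ∀ᵐ ω ∂P, W ω ∈ Set.Icc (0:ℝ) (1/2) := by
  have hvol : (volume (Set.Icc (0:ℝ) (1/2))) = ENNReal.ofReal (1/2) := by
    simp [Real.volume_Icc]
  have hns : volume (Set.Icc (0:ℝ) (1/2)) ≠ 0 := by rw [hvol]; positivity
  have hnt : volume (Set.Icc (0:ℝ) (1/2)) ≠ ⊤ := by rw [hvol]; exact ENNReal.ofReal_ne_top
  have hWae : AEMeasurable W P := hW.aemeasurable hns hnt
  refine (MeasureTheory.ae_map_iff (p := fun y => y ∈ Set.Icc (0:ℝ) (1/2)) hWae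
    measurableSet_Icc).mp ?_
  have hmap : Measure.map W P = ProbabilityTheory.cond volume (Set.Icc (0:ℝ) (1/2)) := hW
  rw [hmap, ProbabilityTheory.cond]
  have h2 := ae_restrict_mem (μ := volume) (s := Set.Icc (0:ℝ) (1/2)) measurableSet_Icc
  rw [ae_iff] at h2 ⊢
  simp only [Measure.smul_apply, h2, smul_eq_mul, mul_zero]

end Aux

/-- Case (ii) of Lemma 5 (l-F-ell) of the paper. -/
theorem stmt_3 {Ω : Type*} [MeasurableSpace Ω] (P : Measure Ω) [IsProbabilityMeasure P]
    (X Y Z : Ω → ℝ)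
    (hIndep : iIndepFun ![X, Y, Z] P)
    (hX : pdf.IsUniform X (Set.Icc (0 : ℝ) (1 / 2)) P)
    (hY : pdf.IsUniform Y (Set.Icc (0 : ℝ) (1 / 2)) P)
    (hZ : pdf.IsUniform Z (Set.Icc (0 : ℝ) (1 / 2)) P)
    (ℓ : ℝ) (hℓ : 0 ≤ ℓ) (hfrac : 1 / 2 ≤ Int.fract ℓ) (x : ℝ) :
    P {ω | (⌊1 + X ω + ℓ⌋ : ℝ) + 1 + Z ω - (2 + Y ω) ≤ x}
      = ENNReal.ofReal (2 - 2 * Int.fract ℓ) * P {ω | Z ω - Y ω ≤ x - (⌊ℓ⌋ : ℝ)}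
        + ENNReal.ofReal (2 * Int.fract ℓ - 1) * P {ω | Z ω - Y ω ≤ x - (⌊ℓ⌋ : ℝ) - 1} := by
  have hvol : (volume (Set.Icc (0:ℝ) (1/2))) = ENNReal.ofReal (1/2) := by
    simp [Real.volume_Icc]
  have hns : volume (Set.Icc (0:ℝ) (1/2)) ≠ 0 := by rw [hvol]; positivity
  have hnt : volume (Set.Icc (0:ℝ) (1/2)) ≠ ⊤ := by rw [hvol]; exact ENNReal.ofReal_ne_top
  set F := Int.fract ℓ with hFdef
  have hF0 : 0 ≤ F := Int.fract_nonneg ℓ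
  have hF1 : F < 1 := Int.fract_lt_one ℓ
  have hFeq : (⌊ℓ⌋ : ℝ) + F = ℓ := Int.floor_add_fract ℓ
  set c : ℝ := 1 - F with hcdef
  have hc0 : 0 ≤ c := by simp only [hcdef]; linarith
  have hc : c ≤ 1/2 := by simp only [hcdef]; linarith
  -- measurable modifications
  have hXae : AEMeasurable X P := hX.aemeasurable hns hnt
  have hYae : AEMeasurable Y P := hY.aemeasurable hns hnt
  have hZae : AEMeasurable Z P := hZ.aemeasurable hns hnt
  set X' := hXae.mk X with hX'def
  set Y' := hYae.mk Y with hY'def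
  set Z' := hZae.mk Z with hZ'def
  have hX'm : Measurable X' := hXae.measurable_mk
  have hY'm : Measurable Y' := hYae.measurable_mk
  have hZ'm : Measurable Z' := hZae.measurable_mk
  have hXe : X =ᵐ[P] X' := hXae.ae_eq_mk
  have hYe : Y =ᵐ[P] Y' := hYae.ae_eq_mk
  have hZe : Z =ᵐ[P] Z' := hZae.ae_eq_mk
  have hX' : pdf.IsUniform X' (Set.Icc (0 : ℝ) (1 / 2)) P := by
    unfold pdf.IsUniform at hX ⊢
    rw [← Measure.map_congr hXe]; exact hX
  have hY' : pdf.IsUniform Y' (Set.Icc (0 : ℝ) (1 / 2)) P := by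
    unfold pdf.IsUniform at hY ⊢
    rw [← Measure.map_congr hYe]; exact hY
  have hZ' : pdf.IsUniform Z' (Set.Icc (0 : ℝ) (1 / 2)) P := by
    unfold pdf.IsUniform at hZ ⊢
    rw [← Measure.map_congr hZe]; exact hZ
  have hIndep' : iIndepFun ![X', Y', Z'] P := by
    refine iIndepFun_congr_aux hIndep ?_
    intro i
    fin_cases i
    · simpa using hXe
    · simpa using hYe
    · simpa using hZe
  -- independence of Z' - Y' and X'
  have hmeas : ∀ i, Measurable (![X', Y', Z'] i) := by
    intro i; fin_cases i <;> assumption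
  have hprod : IndepFun (fun ω => (Y' ω, Z' ω)) X' P := by
    have := hIndep'.indepFun_prodMk hmeas 1 2 0 (by decide) (by decide)
    simpa using this
  have hDiff : IndepFun (fun ω => Z' ω - Y' ω) X' P := by
    have := hprod.comp (φ := fun p : ℝ × ℝ => p.2 - p.1) (ψ := id)
      (measurable_snd.sub measurable_fst) measurable_id
    simpa [Function.comp_def] using this
  -- uniform probabilities
  have hPlt : P (X' ⁻¹' Set.Iio c) = ENNReal.ofReal (2 - 2 * F) := by
    rw [unif_lt_aux P X' hX' c hc0 hc]
    congr 1
    simp only [hcdef]; ring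
  have hPge : P (X' ⁻¹' Set.Ici c) = ENNReal.ofReal (2 * F - 1) := by
    rw [unif_ge_aux P X' hX' c hc0 hc]
    congr 1
    simp only [hcdef]; ring
  -- floor computation
  have hfloor1 : ∀ t : ℝ, 0 ≤ t → t < c → ⌊1 + t + ℓ⌋ = ⌊ℓ⌋ + 1 := by
    intro t ht0 htc
    rw [Int.floor_eq_iff]
    constructor <;> push_cast <;> simp only [hcdef] at htc <;> linarith
  have hfloor2 : ∀ t : ℝ, t ≤ 1/2 → c ≤ t → ⌊1 + t + ℓ⌋ = ⌊ℓ⌋ + 2 := by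
    intro t ht1 htc
    rw [Int.floor_eq_iff]
    constructor <;> push_cast <;> simp only [hcdef] at htc <;> linarith
  -- event decomposition
  set A1 : Set Ω :=
    (fun ω => Z' ω - Y' ω) ⁻¹' Set.Iic (x - (⌊ℓ⌋ : ℝ)) ∩ X' ⁻¹' Set.Iio c with hA1def
  set A2 : Set Ω :=
    (fun ω => Z' ω - Y' ω) ⁻¹' Set.Iic (x - (⌊ℓ⌋ : ℝ) - 1) ∩ X' ⁻¹' Set.Ici c with hA2def
  have hLHS : P {ω | (⌊1 + X ω + ℓ⌋ : ℝ) + 1 + Z ω - (2 + Y ω) ≤ x} = P (A1 ∪ A2) := by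
    refine measure_congr ?_
    rw [Filter.eventuallyEq_set]
    filter_upwards [hXe, hYe, hZe, unif_full_aux P X' hX'] with ω h1 h2 h3 h4
    simp only [Set.mem_setOf_eq, hA1def, hA2def, Set.mem_union, Set.mem_inter_iff,
      Set.mem_preimage, Set.mem_Iic, Set.mem_Iio, Set.mem_Ici, h1, h2, h3]
    obtain ⟨h40, h41⟩ := h4
    by_cases hlt : X' ω < c
    · rw [hfloor1 _ h40 hlt]
      simp only [hlt, and_true, not_le.mpr hlt, and_false, or_false]
      push_cast
      constructor <;> intro <;> linarith
    · rw [hfloor2 _ h41 (not_lt.mp hlt)]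
      simp only [hlt, and_false, not_lt.mp hlt, and_true, false_or]
      push_cast
      constructor <;> intro <;> linarith
  have hdisj : Disjoint A1 A2 := by
    rw [Set.disjoint_left]
    rintro ω ⟨_, hω1⟩ ⟨_, hω2⟩
    simp only [Set.mem_preimage, Set.mem_Iio, Set.mem_Ici] at hω1 hω2
    linarith
  have hA2meas : MeasurableSet A2 :=
    ((hZ'm.sub hY'm) measurableSet_Iic).inter (hX'm measurableSet_Ici)
  have hfac1 : P A1 = P ((fun ω => Z' ω - Y' ω) ⁻¹' Set.Iic (x - (⌊ℓ⌋ : ℝ)))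
      * P (X' ⁻¹' Set.Iio c) :=
    hDiff.measure_inter_preimage_eq_mul _ _ measurableSet_Iic measurableSet_Iio
  have hfac2 : P A2 = P ((fun ω => Z' ω - Y' ω) ⁻¹' Set.Iic (x - (⌊ℓ⌋ : ℝ) - 1))
      * P (X' ⁻¹' Set.Ici c) :=
    hDiff.measure_inter_preimage_eq_mul _ _ measurableSet_Iic measurableSet_Ici
  have hR1 : P {ω | Z ω - Y ω ≤ x - (⌊ℓ⌋ : ℝ)}
      = P ((fun ω => Z' ω - Y' ω) ⁻¹' Set.Iic (x - (⌊ℓ⌋ : ℝ))) := by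
    refine measure_congr ?_
    rw [Filter.eventuallyEq_set]
    filter_upwards [hYe, hZe] with ω h2 h3
    simp [Set.mem_preimage, h2, h3]
  have hR2 : P {ω | Z ω - Y ω ≤ x - (⌊ℓ⌋ : ℝ) - 1}
      = P ((fun ω => Z' ω - Y' ω) ⁻¹' Set.Iic (x - (⌊ℓ⌋ : ℝ) - 1)) := by
    refine measure_congr ?_
    rw [Filter.eventuallyEq_set]
    filter_upwards [hYe, hZe] with ω h2 h3
    simp [Set.mem_preimage, h2, h3]
  rw [hLHS, measure_union hdisj hA2meas, hfac1, hfac2, hPlt, hPge, hR1, hR2]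
  ring
end

section
/- Let X, Y, Z be independent random variables on a probability space (Ω, ℙ), each uniformly distributed on the interval [0, 1/2]. Let R be a positive integer, let h > 0 be a real number, set ℓ := R + h, and define the random variable T := ⌊1 + X + ℓ⌋ + 1 + Z − (2 + Y). Then the probability p_error(R, h) := ℙ(T ≤ R) satisfies: p_error(R, h) = 1/2 if 0 < h ≤ 1/2; p_error(R, h) = 1 − h if 1/2 < h < 1; and p_error(R, h) = 0 if h ≥ 1. -/
open MeasureTheory ProbabilityTheory

lemma iIndepFun_congr_ae {ι Ω : Type*} [MeasurableSpace Ω] {P : Measure Ω}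
    {β : ι → Type*} [m : ∀ i, MeasurableSpace (β i)] {f g : ∀ i, Ω → β i}
    (hf : iIndepFun f P) (h : ∀ i, f i =ᵐ[P] g i) : iIndepFun g P := by
  rw [iIndepFun_iff_measure_inter_preimage_eq_mul] at hf ⊢
  intro s sets hsets
  have hae : ∀ i ∈ s, (f i ⁻¹' sets i : Set Ω) =ᵐ[P] (g i ⁻¹' sets i) :=
    fun i _ => (h i).fun_comp (sets i)
  have h1 : ((⋂ i ∈ s, f i ⁻¹' sets i : Set Ω)) =ᵐ[P] (⋂ i ∈ s, g i ⁻¹' sets i) := by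
    have : ∀ᵐ ω ∂P, ∀ i ∈ s, ω ∈ (f i ⁻¹' sets i) ↔ ω ∈ (g i ⁻¹' sets i) := by
      rw [Filter.eventually_all_finset]
      intro i hi
      filter_upwards [h i] with ω hω
      simp [Set.mem_preimage, hω]
    filter_upwards [this] with ω hω
    show (ω ∈ ⋂ i ∈ s, f i ⁻¹' sets i) = (ω ∈ ⋂ i ∈ s, g i ⁻¹' sets i)
    simp only [Set.mem_iInter, eq_iff_iff]
    exact ⟨fun h' i hi => (hω i hi).1 (h' i hi), fun h' i hi => (hω i hi).2 (h' i hi)⟩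
  rw [← measure_congr h1, hf s hsets]
  exact Finset.prod_congr rfl fun i hi => measure_congr (hae i hi)
open scoped ENNReal

lemma half_inv : (ENNReal.ofReal (1/2))⁻¹ = 2 := by
  rw [one_div, ENNReal.ofReal_inv_of_pos (by norm_num), ENNReal.ofReal_ofNat, inv_inv]

noncomputable def unif : Measure ℝ := ProbabilityTheory.cond volume (Set.Icc (0:ℝ) (1/2))

lemma unif_apply (A : Set ℝ) : unif A = 2 * volume (Set.Icc (0:ℝ) (1/2) ∩ A) := by
  rw [unif, cond_apply measurableSet_Icc, Real.volume_Icc, show (1/2 - 0 : ℝ) = 1/2 by norm_num,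
    half_inv]

lemma unif_eq_smul : unif = (2 : ℝ≥0∞) • volume.restrict (Set.Icc (0:ℝ) (1/2)) := by
  ext A hA
  rw [unif_apply, Measure.smul_apply, Measure.restrict_apply hA, smul_eq_mul, Set.inter_comm]

instance : IsProbabilityMeasure unif := by
  rw [unif]
  exact cond_isProbabilityMeasure_of_finite
    (by rw [Real.volume_Icc]; norm_num) (by rw [Real.volume_Icc]; exact ENNReal.ofReal_ne_top)

lemma unif_prod_le : (unif.prod unif) {p : ℝ × ℝ | p.2 ≤ p.1} = 2⁻¹ := by
  have hS : MeasurableSet {p : ℝ × ℝ | p.2 ≤ p.1} := measurableSet_le measurable_snd measurable_fst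
  rw [Measure.prod_apply hS]
  have h0 : ∀ y : ℝ, (Prod.mk y ⁻¹' {p : ℝ × ℝ | p.2 ≤ p.1}) = Set.Iic y := by
    intro y; ext z; simp [Set.mem_Iic]
  simp only [h0]
  rw [unif_eq_smul, lintegral_smul_measure]
  have hcong : ∫⁻ y in Set.Icc (0:ℝ) (1/2),
        ((2:ℝ≥0∞) • volume.restrict (Set.Icc (0:ℝ) (1/2))) (Set.Iic y) ∂volume
      = ∫⁻ y in Set.Icc (0:ℝ) (1/2), 2 * ENNReal.ofReal y ∂volume := by
    apply setLIntegral_congr_fun measurableSet_Icc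
    intro y hy
    dsimp only
    rw [Measure.smul_apply, Measure.restrict_apply measurableSet_Iic, smul_eq_mul]
    have : Set.Iic y ∩ Set.Icc (0:ℝ) (1/2) = Set.Icc 0 y := by
      ext t
      simp only [Set.mem_inter_iff, Set.mem_Icc, Set.mem_Iic]
      exact ⟨fun ⟨h3, ⟨h1, _⟩⟩ => ⟨h1, h3⟩, fun ⟨h1, h3⟩ => ⟨h3, ⟨h1, h3.trans hy.2⟩⟩⟩
    rw [this, Real.volume_Icc, sub_zero]
  rw [hcong, lintegral_const_mul 2 (by fun_prop)]
  have h8 : ∫⁻ y in Set.Icc (0:ℝ) (1/2), ENNReal.ofReal y ∂volume = (8:ℝ≥0∞)⁻¹ := by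
    rw [← ofReal_integral_eq_lintegral_ofReal]
    · rw [MeasureTheory.integral_Icc_eq_integral_Ioc,
        ← intervalIntegral.integral_of_le (by norm_num : (0:ℝ) ≤ 1/2), integral_id]
      rw [show ((1/2:ℝ)^2 - 0^2)/2 = 8⁻¹ by norm_num, ENNReal.ofReal_inv_of_pos (by norm_num),
        ENNReal.ofReal_ofNat]
    · exact continuous_id.integrableOn_Icc
    · filter_upwards [ae_restrict_mem measurableSet_Icc] with y hy using hy.1
  rw [h8, smul_eq_mul, ← mul_assoc, show ((2:ℝ≥0∞) * 2) = 4 by norm_num,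
    show ((8:ℝ≥0∞))⁻¹ = 4⁻¹ * 2⁻¹ by
      rw [← ENNReal.mul_inv (by norm_num) (by norm_num)]; norm_num,
    ← mul_assoc, ENNReal.mul_inv_cancel (by norm_num) (by norm_num), one_mul]

lemma keyiff (R : ℕ) (h x y z : ℝ) :
    ((⌊1 + x + ((R:ℝ) + h)⌋ : ℝ) + 1 + z - (2 + y) ≤ (R:ℝ)) ↔ ((⌊x + h⌋ : ℝ) ≤ y - z) := by
  have hfl : ⌊1 + x + ((R:ℝ) + h)⌋ = ⌊x + h⌋ + (1 + (R:ℤ)) := by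
    rw [show (1:ℝ) + x + ((R:ℝ) + h) = (x + h) + (((1 + (R:ℤ)) : ℤ) : ℝ) by push_cast; ring,
      Int.floor_add_intCast]
  rw [hfl]
  push_cast
  constructor <;> intro <;> linarith

lemma case1iff (h x y z : ℝ) (hh : 0 < h) (hh2 : h ≤ 1/2) (hx : x ∈ Set.Icc (0:ℝ) (1/2))
    (hne : x ≠ 1 - h) : ((⌊x + h⌋ : ℝ) ≤ y - z) ↔ z ≤ y := by
  have h0 : ⌊x + h⌋ = 0 := by
    rw [Int.floor_eq_zero_iff]
    constructor
    · linarith [hx.1]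
    · rcases lt_or_eq_of_le (by linarith [hx.2] : x + h ≤ 1) with h' | h'
      · exact h'
      · exact absurd (by linarith) hne
  rw [h0]
  push_cast
  constructor <;> intro <;> linarith

lemma case2iff (h x y z : ℝ) (hh : 0 < h) (h2 : h < 1) (hx : x ∈ Set.Icc (0:ℝ) (1/2))
    (hy : y ∈ Set.Icc (0:ℝ) (1/2)) (hz : z ∈ Set.Icc (0:ℝ) (1/2)) :
    ((⌊x + h⌋ : ℝ) ≤ y - z) ↔ (x < 1 - h ∧ z ≤ y) := by
  constructor
  · intro hle
    have hyz : y - z ≤ 1/2 := by linarith [hy.2, hz.1]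
    have hfl1 : ⌊x + h⌋ < 1 := by exact_mod_cast lt_of_le_of_lt (hle.trans hyz) (by norm_num : (1/2:ℝ) < (1:ℤ))
    have hfl0 : ⌊x + h⌋ ≤ 0 := by omega
    have hlt : x + h < 1 := lt_of_lt_of_le (Int.lt_floor_add_one _) (by exact_mod_cast by omega : (⌊x+h⌋:ℝ) + 1 ≤ 1)
    have hge : (0:ℤ) ≤ ⌊x + h⌋ := Int.floor_nonneg.2 (by linarith [hx.1])
    have : ⌊x + h⌋ = 0 := le_antisymm hfl0 hge
    rw [this] at hle
    push_cast at hle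
    exact ⟨by linarith, by linarith⟩
  · rintro ⟨hxlt, hzy⟩
    have h0 : ⌊x + h⌋ = 0 := by
      rw [Int.floor_eq_zero_iff]
      exact ⟨by linarith [hx.1], by linarith⟩
    rw [h0]; push_cast; linarith

lemma case3iff (h x y z : ℝ) (h1 : 1 ≤ h) (hx : x ∈ Set.Icc (0:ℝ) (1/2))
    (hy : y ∈ Set.Icc (0:ℝ) (1/2)) (hz : z ∈ Set.Icc (0:ℝ) (1/2)) :
    ¬ ((⌊x + h⌋ : ℝ) ≤ y - z) := by
  intro hle
  have hge : (1:ℤ) ≤ ⌊x + h⌋ := Int.le_floor.2 (by push_cast; linarith [hx.1])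
  have : (1:ℝ) ≤ (⌊x + h⌋ : ℝ) := by exact_mod_cast hge
  linarith [hy.2, hz.1]

/-- Theorem 3 of the paper: the probability of the erroneous decision to grant access.
Here `T ω = ⌊1 + X ω + ℓ⌋ + 1 + Z ω − (2 + Y ω)` with `ℓ = R + h`. -/
theorem stmt_8 {Ω : Type*} [MeasurableSpace Ω] (P : Measure Ω) [IsProbabilityMeasure P]
    (X Y Z : Ω → ℝ)
    (hIndep : iIndepFun ![X, Y, Z] P)
    (hX : pdf.IsUniform X (Set.Icc (0 : ℝ) (1 / 2)) P)
    (hY : pdf.IsUniform Y (Set.Icc (0 : ℝ) (1 / 2)) P)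
    (hZ : pdf.IsUniform Z (Set.Icc (0 : ℝ) (1 / 2)) P)
    (R : ℕ) (hR : 0 < R) (h : ℝ) (hh : 0 < h) :
    (h ≤ 1 / 2 →
      P {ω | (⌊1 + X ω + ((R : ℝ) + h)⌋ : ℝ) + 1 + Z ω - (2 + Y ω) ≤ (R : ℝ)} = 1 / 2) ∧
    (1 / 2 < h → h < 1 →
      P {ω | (⌊1 + X ω + ((R : ℝ) + h)⌋ : ℝ) + 1 + Z ω - (2 + Y ω) ≤ (R : ℝ)}
        = ENNReal.ofReal (1 - h)) ∧
    (1 ≤ h →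
      P {ω | (⌊1 + X ω + ((R : ℝ) + h)⌋ : ℝ) + 1 + Z ω - (2 + Y ω) ≤ (R : ℝ)} = 0) := by
  have hI0 : volume (Set.Icc (0:ℝ) (1/2)) ≠ 0 := by rw [Real.volume_Icc]; norm_num
  have hIt : volume (Set.Icc (0:ℝ) (1/2)) ≠ ⊤ := by rw [Real.volume_Icc]; exact ENNReal.ofReal_ne_top
  -- measurable modifications
  have aemX : AEMeasurable X P := hX.aemeasurable hI0 hIt
  have aemY : AEMeasurable Y P := hY.aemeasurable hI0 hIt
  have aemZ : AEMeasurable Z P := hZ.aemeasurable hI0 hIt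
  set X' := aemX.mk X with hX'def
  set Y' := aemY.mk Y with hY'def
  set Z' := aemZ.mk Z with hZ'def
  have hmX : Measurable X' := aemX.measurable_mk
  have hmY : Measurable Y' := aemY.measurable_mk
  have hmZ : Measurable Z' := aemZ.measurable_mk
  have hXX : X =ᵐ[P] X' := aemX.ae_eq_mk
  have hYY : Y =ᵐ[P] Y' := aemY.ae_eq_mk
  have hZZ : Z =ᵐ[P] Z' := aemZ.ae_eq_mk
  have hmapX : P.map X' = unif := by
    rw [← Measure.map_congr hXX]; exact hX
  have hmapY : P.map Y' = unif := by
    rw [← Measure.map_congr hYY]; exact hY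
  have hmapZ : P.map Z' = unif := by
    rw [← Measure.map_congr hZZ]; exact hZ
  have hpreX : ∀ A : Set ℝ, MeasurableSet A → P (X' ⁻¹' A) = unif A := fun A hA => by
    rw [← Measure.map_apply hmX hA, hmapX]
  have hpreY : ∀ A : Set ℝ, MeasurableSet A → P (Y' ⁻¹' A) = unif A := fun A hA => by
    rw [← Measure.map_apply hmY hA, hmapY]
  have hpreZ : ∀ A : Set ℝ, MeasurableSet A → P (Z' ⁻¹' A) = unif A := fun A hA => by
    rw [← Measure.map_apply hmZ hA, hmapZ]
  have hIndep' : iIndepFun ![X', Y', Z'] P := by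
    apply iIndepFun_congr_ae hIndep
    intro i
    fin_cases i <;> simpa using ‹_›
  -- a.e. membership in the interval
  have haemem : ∀ (W : Ω → ℝ), Measurable W →
      (∀ A : Set ℝ, MeasurableSet A → P (W ⁻¹' A) = unif A) →
      ∀ᵐ ω ∂P, W ω ∈ Set.Icc (0:ℝ) (1/2) := by
    intro W hm hpre
    rw [ae_iff]
    have : {ω | ¬ W ω ∈ Set.Icc (0:ℝ) (1/2)} = W ⁻¹' (Set.Icc (0:ℝ) (1/2))ᶜ := rfl
    rw [this, hpre _ measurableSet_Icc.compl, unif_apply]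
    simp
  have haeX : ∀ᵐ ω ∂P, X' ω ∈ Set.Icc (0:ℝ) (1/2) := haemem X' hmX hpreX
  have haeY : ∀ᵐ ω ∂P, Y' ω ∈ Set.Icc (0:ℝ) (1/2) := haemem Y' hmY hpreY
  have haeZ : ∀ᵐ ω ∂P, Z' ω ∈ Set.Icc (0:ℝ) (1/2) := haemem Z' hmZ hpreZ
  -- event with primed variables
  set E := {ω | (⌊1 + X ω + ((R : ℝ) + h)⌋ : ℝ) + 1 + Z ω - (2 + Y ω) ≤ (R : ℝ)} with hEdef
  set E' := {ω | (⌊1 + X' ω + ((R : ℝ) + h)⌋ : ℝ) + 1 + Z' ω - (2 + Y' ω) ≤ (R : ℝ)} with hE'def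
  have hEE : P E = P E' := by
    apply measure_congr
    rw [Filter.eventuallyEq_set]
    filter_upwards [hXX, hYY, hZZ] with ω h1 h2 h3
    simp only [hEdef, hE'def, Set.mem_setOf_eq, h1, h2, h3]
  -- probability that Z' ≤ Y'
  have hS : MeasurableSet {p : ℝ × ℝ | p.2 ≤ p.1} := measurableSet_le measurable_snd measurable_fst
  have hindYZ : IndepFun Y' Z' P := by
    have := hIndep'.indepFun (i := 1) (j := 2) (by decide)
    simpa using this
  have hmapPair : P.map (fun ω => (Y' ω, Z' ω)) = unif.prod unif := by
    rw [(indepFun_iff_map_prod_eq_prod_map_map hmY.aemeasurable hmZ.aemeasurable).1 hindYZ,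
      hmapY, hmapZ]
  have hqpre : P ((fun ω => (Y' ω, Z' ω)) ⁻¹' {p : ℝ × ℝ | p.2 ≤ p.1}) = 2⁻¹ := by
    rw [← Measure.map_apply (hmY.prodMk hmZ) hS, hmapPair, unif_prod_le]
  have hq : P {ω | Z' ω ≤ Y' ω} = 2⁻¹ := hqpre
  refine ⟨?_, ?_, ?_⟩
  · -- Case 1 : 0 < h ≤ 1/2
    intro hh2
    have hne : ∀ᵐ ω ∂P, X' ω ≠ 1 - h := by
      rw [ae_iff]
      have : {ω | ¬ X' ω ≠ 1 - h} = X' ⁻¹' {1 - h} := by ext ω; simp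
      rw [this, hpreX _ (measurableSet_singleton _), unif_apply,
        measure_mono_null Set.inter_subset_right Real.volume_singleton, mul_zero]
    have : P E' = P {ω | Z' ω ≤ Y' ω} := by
      apply measure_congr
      rw [Filter.eventuallyEq_set]
      filter_upwards [haeX, hne] with ω h1 h2
      simp only [hE'def, Set.mem_setOf_eq]
      rw [keyiff, case1iff h (X' ω) (Y' ω) (Z' ω) hh hh2 h1 h2]
    rw [hEE, this, hq, one_div]
  · -- Case 2 : 1/2 < h < 1
    intro h1 h2
    have hiff : P E' = P (X' ⁻¹' Set.Iio (1 - h) ∩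
        (fun ω => (Y' ω, Z' ω)) ⁻¹' {p : ℝ × ℝ | p.2 ≤ p.1}) := by
      apply measure_congr
      rw [Filter.eventuallyEq_set]
      filter_upwards [haeX, haeY, haeZ] with ω hx hy hz
      simp only [hE'def, Set.mem_setOf_eq, Set.mem_inter_iff, Set.mem_preimage, Set.mem_Iio]
      rw [keyiff, case2iff h (X' ω) (Y' ω) (Z' ω) hh h2 hx hy hz]
    have hind2 : IndepFun (fun ω => (Y' ω, Z' ω)) X' P := by
      have := hIndep'.indepFun_prodMk (by
        intro i; fin_cases i <;> simpa using ‹_›) 1 2 0 (by decide) (by decide)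
      simpa using this
    have hmul := (indepFun_iff_measure_inter_preimage_eq_mul.1 hind2)
      {p : ℝ × ℝ | p.2 ≤ p.1} (Set.Iio (1 - h)) hS measurableSet_Iio
    rw [hEE, hiff, Set.inter_comm, hmul, hqpre, hpreX _ measurableSet_Iio, unif_apply]
    have hico : Set.Icc (0:ℝ) (1/2) ∩ Set.Iio (1 - h) = Set.Ico 0 (1 - h) := by
      ext t
      simp only [Set.mem_inter_iff, Set.mem_Icc, Set.mem_Ico, Set.mem_Iio]
      exact ⟨fun ⟨⟨ha, _⟩, hb⟩ => ⟨ha, hb⟩, fun ⟨ha, hb⟩ => ⟨⟨ha, by linarith⟩, hb⟩⟩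
    rw [hico, Real.volume_Ico, sub_zero, ← mul_assoc,
      ENNReal.inv_mul_cancel (by norm_num) (by norm_num), one_mul]
  · -- Case 3 : 1 ≤ h
    intro h1
    have : P E' = P (∅ : Set Ω) := by
      apply measure_congr
      rw [Filter.eventuallyEq_set]
      filter_upwards [haeX, haeY, haeZ] with ω hx hy hz
      simp only [hE'def, Set.mem_setOf_eq, Set.mem_empty_iff_false, iff_false]
      rw [keyiff]
      exact case3iff h (X' ω) (Y' ω) (Z' ω) h1 hx hy hz
    rw [hEE, this, measure_empty]
end

section
/- Let X, Y, Z be independent random variables on a probability space (Ω, ℙ), each uniformly distributed on the interval [0, 1/2]. Let R be a positive integer and h a real number with 0 < h < 1/2, set ℓ := R + h, and define T := ⌊1 + X + ℓ⌋ + 1 + Z − (2 + Y). Then ℙ(T ≤ R) = 1/2. -/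
open MeasureTheory ProbabilityTheory
open scoped ENNReal

/-- Case (i) of the proof of Theorem 3: for `0 < h < 1/2` and `ℓ = R + h`,
the probability of the erroneous acceptance decision is `1/2`. -/
theorem stmt_15 {Ω : Type*} [MeasurableSpace Ω] (P : Measure Ω) [IsProbabilityMeasure P]
    (X Y Z : Ω → ℝ)
    (hIndep : iIndepFun ![X, Y, Z] P)
    (hX : pdf.IsUniform X (Set.Icc (0 : ℝ) (1 / 2)) P)
    (hY : pdf.IsUniform Y (Set.Icc (0 : ℝ) (1 / 2)) P)
    (hZ : pdf.IsUniform Z (Set.Icc (0 : ℝ) (1 / 2)) P)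
    (R : ℕ) (hR : 0 < R) (h : ℝ) (hh0 : 0 < h) (hh1 : h < 1 / 2) :
    P {ω | (⌊1 + X ω + ((R : ℝ) + h)⌋ : ℝ) + 1 + Z ω - (2 + Y ω) ≤ (R : ℝ)} = 1 / 2 := by
  set s : Set ℝ := Set.Icc (0 : ℝ) (1 / 2) with hs
  have hsm : MeasurableSet s := measurableSet_Icc
  have hvs : (volume s : ℝ≥0∞) ≠ 0 := by
    simp [hs, Real.volume_Icc]
  have hvs' : (volume s : ℝ≥0∞) ≠ ⊤ := by
    simp [hs, Real.volume_Icc]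
  have hXm : AEMeasurable X P := hX.aemeasurable hvs hvs'
  have hYm : AEMeasurable Y P := hY.aemeasurable hvs hvs'
  have hZm : AEMeasurable Z P := hZ.aemeasurable hvs hvs'
  set μ : Measure ℝ := (volume : Measure ℝ)[|s] with hμ
  have hμatom : ∀ y : ℝ, μ {y} = 0 := by
    intro y
    have h0 : (volume : Measure ℝ).restrict s {y} = 0 := by
      rw [Measure.restrict_apply (measurableSet_singleton y)]
      exact measure_mono_null Set.inter_subset_left (measure_singleton y)
    simp only [hμ, ProbabilityTheory.cond, Measure.smul_apply, smul_eq_mul, h0, mul_zero]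
  -- X is a.e. in s
  have hXs : ∀ᵐ ω ∂P, X ω ∈ s := by
    have hmap : P.map X = μ := hX
    have : P.map X sᶜ = 0 := by
      rw [hmap]
      simp only [hμ, ProbabilityTheory.cond, Measure.smul_apply, smul_eq_mul,
        Measure.restrict_apply hsm.compl]
      simp
    rw [Measure.map_apply_of_aemeasurable hXm hsm.compl] at this
    exact (ae_iff.2 (by simpa [Set.preimage, Set.mem_compl_iff] using this))
  -- rewrite the event
  have hset : P {ω | (⌊1 + X ω + ((R : ℝ) + h)⌋ : ℝ) + 1 + Z ω - (2 + Y ω) ≤ (R : ℝ)}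
      = P {ω | Z ω ≤ Y ω} := by
    apply measure_congr
    rw [Filter.eventuallyEq_set]
    filter_upwards [hXs] with ω hω
    have hfloor : ⌊1 + X ω + ((R : ℝ) + h)⌋ = (R : ℤ) + 1 := by
      rw [Int.floor_eq_iff]
      constructor
      · push_cast
        nlinarith [hω.1]
      · push_cast
        nlinarith [hω.2]
    simp only [Set.mem_setOf_eq, hfloor]
    push_cast
    constructor <;> intro h' <;> linarith
  rw [hset]
  -- independence of Y and Z
  have hYZ : IndepFun Y Z P := by
    have := hIndep.indepFun (i := 1) (j := 2) (by decide)
    simpa using this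
  have hmapY : P.map Y = μ := hY
  have hmapZ : P.map Z = μ := hZ
  have hprod : P.map (fun ω => (Y ω, Z ω)) = μ.prod μ := by
    rw [(indepFun_iff_map_prod_eq_prod_map_map hYm hZm).1 hYZ, hmapY, hmapZ]
  have instμ : IsProbabilityMeasure μ := by
    rw [← hmapY]; exact Measure.isProbabilityMeasure_map hYm
  have hmsle : MeasurableSet {p : ℝ × ℝ | p.2 ≤ p.1} :=
    measurableSet_le measurable_snd measurable_fst
  have hmslt : MeasurableSet {p : ℝ × ℝ | p.2 < p.1} :=
    measurableSet_lt measurable_snd measurable_fst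
  have hmslt' : MeasurableSet {p : ℝ × ℝ | p.1 < p.2} :=
    measurableSet_lt measurable_fst measurable_snd
  have hPapp : P {ω | Z ω ≤ Y ω} = (μ.prod μ) {p : ℝ × ℝ | p.2 ≤ p.1} := by
    rw [← hprod, Measure.map_apply_of_aemeasurable (hYm.prodMk hZm) hmsle]
    rfl
  -- diagonal has measure zero
  have hdiag : (μ.prod μ) {p : ℝ × ℝ | p.2 = p.1} = 0 := by
    have hmsd : MeasurableSet {p : ℝ × ℝ | p.2 = p.1} :=
      measurableSet_eq_fun measurable_snd measurable_fst
    rw [Measure.prod_apply hmsd]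
    have hpre : ∀ x : ℝ, (Prod.mk x ⁻¹' {p : ℝ × ℝ | p.2 = p.1}) = {x} := by
      intro x; ext y; simp [eq_comm]
    simp [hpre, hμatom]
  -- symmetry
  have hswap : (μ.prod μ) {p : ℝ × ℝ | p.1 < p.2} = (μ.prod μ) {p : ℝ × ℝ | p.2 < p.1} := by
    conv_lhs => rw [← Measure.prod_swap]
    rw [Measure.map_apply measurable_swap hmslt']
    rfl
  have hsplit : (μ.prod μ) {p : ℝ × ℝ | p.2 ≤ p.1} = (μ.prod μ) {p : ℝ × ℝ | p.2 < p.1} := by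
    have : {p : ℝ × ℝ | p.2 ≤ p.1} = {p : ℝ × ℝ | p.2 < p.1} ∪ {p : ℝ × ℝ | p.2 = p.1} := by
      ext p; simp [le_iff_lt_or_eq]
    rw [this]
    refine le_antisymm ?_ (measure_mono (Set.subset_union_left))
    calc (μ.prod μ) ({p : ℝ × ℝ | p.2 < p.1} ∪ {p : ℝ × ℝ | p.2 = p.1})
        ≤ (μ.prod μ) {p : ℝ × ℝ | p.2 < p.1} + (μ.prod μ) {p : ℝ × ℝ | p.2 = p.1} :=
          measure_union_le _ _
      _ = (μ.prod μ) {p : ℝ × ℝ | p.2 < p.1} := by rw [hdiag, add_zero]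
  have htotal : (μ.prod μ) {p : ℝ × ℝ | p.2 < p.1} + (μ.prod μ) {p : ℝ × ℝ | p.1 < p.2}
      + (μ.prod μ) {p : ℝ × ℝ | p.2 = p.1} = 1 := by
    have hdisj1 : Disjoint {p : ℝ × ℝ | p.2 < p.1} {p : ℝ × ℝ | p.1 < p.2} := by
      rw [Set.disjoint_left]; intro p h1 h2
      simp only [Set.mem_setOf_eq] at h1 h2
      exact absurd (lt_trans h1 h2) (lt_irrefl _)
    have hdisj2 : Disjoint ({p : ℝ × ℝ | p.2 < p.1} ∪ {p : ℝ × ℝ | p.1 < p.2})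
        {p : ℝ × ℝ | p.2 = p.1} := by
      rw [Set.disjoint_left]; rintro p (h1 | h1) h2 <;>
        simp only [Set.mem_setOf_eq] at * <;> [exact absurd h2 (ne_of_lt h1);
          exact absurd h2.symm (ne_of_lt h1)]
    have hcover : {p : ℝ × ℝ | p.2 < p.1} ∪ {p : ℝ × ℝ | p.1 < p.2} ∪ {p : ℝ × ℝ | p.2 = p.1}
        = Set.univ := by
      ext p; simp only [Set.mem_union, Set.mem_setOf_eq, Set.mem_univ, iff_true]
      rcases lt_trichotomy p.2 p.1 with h' | h' | h'
      · exact Or.inl (Or.inl h')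
      · exact Or.inr h'
      · exact Or.inl (Or.inr h')
    have := measure_union hdisj2 (measurableSet_eq_fun measurable_snd measurable_fst)
      (μ := μ.prod μ)
    rw [measure_union hdisj1 hmslt'] at this
    rw [← this, hcover, measure_univ]
  rw [hPapp, hsplit]
  rw [hswap, hdiag, add_zero] at htotal
  have h2 : 2 * (μ.prod μ) {p : ℝ × ℝ | p.2 < p.1} = 1 := by
    rw [two_mul]; exact htotal
  have hhalf : (μ.prod μ) {p : ℝ × ℝ | p.2 < p.1} = 2⁻¹ := by
    have := congrArg (fun x => (2 : ℝ≥0∞)⁻¹ * x) h2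
    simpa [← mul_assoc, ENNReal.inv_mul_cancel (two_ne_zero)
      (by norm_num : (2 : ℝ≥0∞) ≠ ⊤)] using this
  rw [hhalf, one_div]
end

section
/- Let X, Y, Z be independent random variables on a probability space (Ω, ℙ), each uniformly distributed on the interval [0, 1/2]. Let R be a positive integer and h a real number with 1/2 < h < 1, set ℓ := R + h, and define T := ⌊1 + X + ℓ⌋ + 1 + Z − (2 + Y). Then ℙ(T ≤ R) = 1 − h. -/
open MeasureTheory ProbabilityTheory
open scoped ENNReal

lemma key_iff (R : ℕ) (h x y z : ℝ) (hh0 : 1 / 2 < h) (hh1 : h < 1)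
    (hx : x ∈ Set.Icc (0:ℝ) (1/2)) (hy : y ∈ Set.Icc (0:ℝ) (1/2))
    (hz : z ∈ Set.Icc (0:ℝ) (1/2)) :
    ((⌊1 + x + ((R : ℝ) + h)⌋ : ℝ) + 1 + z - (2 + y) ≤ (R : ℝ)) ↔ (x < 1 - h ∧ z ≤ y) := by
  obtain ⟨hx0, hx2⟩ := hx
  obtain ⟨hy0, hy2⟩ := hy
  obtain ⟨hz0, hz2⟩ := hz
  have harg : 1 + x + ((R : ℝ) + h) = (x + h) + ((R : ℤ) + 1 : ℤ) := by push_cast; ring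
  rw [harg, Int.floor_add_intCast]
  push_cast
  constructor
  · intro hc
    by_cases hcase : x < 1 - h
    · have : ⌊x + h⌋ = 0 := by
        rw [Int.floor_eq_zero_iff]; constructor <;> [linarith; linarith]
      rw [this] at hc
      exact ⟨hcase, by push_cast at hc; linarith⟩
    · exfalso
      push_neg at hcase
      have h1 : (1:ℤ) ≤ ⌊x + h⌋ := by
        rw [Int.le_floor]; push_cast; linarith
      have : (1:ℝ) ≤ (⌊x + h⌋ : ℝ) := by exact_mod_cast h1
      linarith
  · rintro ⟨h1, h2⟩
    have : ⌊x + h⌋ = 0 := by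
      rw [Int.floor_eq_zero_iff]; constructor <;> [linarith; linarith]
    rw [this]
    push_cast
    linarith

lemma lint_piece : ∫⁻ x in Set.Icc (0:ℝ) (1/2), ENNReal.ofReal x = ENNReal.ofReal (1/8) := by
  have hint : ∫ x in Set.Icc (0:ℝ) (1/2), x = 1/8 := by
    rw [MeasureTheory.integral_Icc_eq_integral_Ioc,
      ← intervalIntegral.integral_of_le (by norm_num : (0:ℝ) ≤ 1/2)]
    simp [integral_id]
    norm_num
  rw [← hint, MeasureTheory.ofReal_integral_eq_lintegral_ofReal]
  · exact (continuous_id.integrableOn_Icc)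
  · exact (ae_restrict_iff' measurableSet_Icc).mpr (ae_of_all _ fun x hx => hx.1)

lemma iIndepFun_congr' {Ω : Type*} [MeasurableSpace Ω] {P : Measure Ω}
    {f g : Fin 3 → Ω → ℝ}
    (h : iIndepFun f P) (hfg : ∀ i, f i =ᵐ[P] g i) :
    iIndepFun g P := by
  rw [iIndepFun_iff_measure_inter_preimage_eq_mul] at h ⊢
  intro S sets hmeas
  have hae : ∀ᵐ ω ∂P, ∀ i, f i ω = g i ω := ae_all_iff.mpr hfg
  have h1 : P (⋂ i ∈ S, g i ⁻¹' sets i) = P (⋂ i ∈ S, f i ⁻¹' sets i) := by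
    refine measure_congr (Filter.eventuallyEq_set.mpr ?_)
    filter_upwards [hae] with ω hω
    simp only [Set.mem_iInter, Set.mem_preimage]
    constructor <;> intro hh i hi <;> [rw [hω i]; rw [← hω i]] <;> exact hh i hi
  have h2 : ∀ i ∈ S, P (g i ⁻¹' sets i) = P (f i ⁻¹' sets i) := by
    intro i _
    refine measure_congr (Filter.eventuallyEq_set.mpr ?_)
    filter_upwards [hfg i] with ω hω
    simp [Set.mem_preimage, hω]
  rw [h1, h S hmeas]
  exact (Finset.prod_congr rfl h2).symm

/-- Case (ii) of the proof of Theorem 3: for `1/2 < h < 1` and `ℓ = R + h`,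
the probability of the erroneous acceptance decision is `1 − h`. -/
theorem stmt_16 {Ω : Type*} [MeasurableSpace Ω] (P : Measure Ω) [IsProbabilityMeasure P]
    (X Y Z : Ω → ℝ)
    (hIndep : iIndepFun ![X, Y, Z] P)
    (hX : pdf.IsUniform X (Set.Icc (0 : ℝ) (1 / 2)) P)
    (hY : pdf.IsUniform Y (Set.Icc (0 : ℝ) (1 / 2)) P)
    (hZ : pdf.IsUniform Z (Set.Icc (0 : ℝ) (1 / 2)) P)
    (R : ℕ) (hR : 0 < R) (h : ℝ) (hh0 : 1 / 2 < h) (hh1 : h < 1) :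
    P {ω | (⌊1 + X ω + ((R : ℝ) + h)⌋ : ℝ) + 1 + Z ω - (2 + Y ω) ≤ (R : ℝ)}
      = ENNReal.ofReal (1 - h) := by
  set I : Set ℝ := Set.Icc (0:ℝ) (1/2) with hIdef
  have hIvol : volume I = ENNReal.ofReal (1/2) := by
    rw [hIdef, Real.volume_Icc]; norm_num
  have hI0 : volume I ≠ 0 := by rw [hIvol]; positivity
  have hIt : volume I ≠ ⊤ := by rw [hIvol]; exact ENNReal.ofReal_ne_top
  -- measurable modifications
  have hXam : AEMeasurable X P := hX.aemeasurable hI0 hIt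
  have hYam : AEMeasurable Y P := hY.aemeasurable hI0 hIt
  have hZam : AEMeasurable Z P := hZ.aemeasurable hI0 hIt
  set X' := hXam.mk X with hX'def
  set Y' := hYam.mk Y with hY'def
  set Z' := hZam.mk Z with hZ'def
  have hX'm : Measurable X' := hXam.measurable_mk
  have hY'm : Measurable Y' := hYam.measurable_mk
  have hZ'm : Measurable Z' := hZam.measurable_mk
  have hXX' := hXam.ae_eq_mk
  have hYY' := hYam.ae_eq_mk
  have hZZ' := hZam.ae_eq_mk
  -- uniform laws for modifications
  have hXu' : pdf.IsUniform X' I P := by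
    unfold MeasureTheory.pdf.IsUniform at hX ⊢
    rw [← Measure.map_congr hXX']; exact hX
  have hYu' : pdf.IsUniform Y' I P := by
    unfold MeasureTheory.pdf.IsUniform at hY ⊢
    rw [← Measure.map_congr hYY']; exact hY
  have hZu' : pdf.IsUniform Z' I P := by
    unfold MeasureTheory.pdf.IsUniform at hZ ⊢
    rw [← Measure.map_congr hZZ']; exact hZ
  -- a.e. membership in I
  have hmem : ∀ (W : Ω → ℝ), pdf.IsUniform W I P → ∀ᵐ ω ∂P, W ω ∈ I := by
    intro W hW
    have : P (W ⁻¹' Iᶜ) = 0 := by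
      rw [hW.measure_preimage hI0 hIt measurableSet_Icc.compl, Set.inter_compl_self,
        measure_empty, ENNReal.zero_div]
    rw [ae_iff]
    exact this
  have haeX : ∀ᵐ ω ∂P, X' ω ∈ I := hmem X' hXu'
  have haeY : ∀ᵐ ω ∂P, Y' ω ∈ I := hmem Y' hYu'
  have haeZ : ∀ᵐ ω ∂P, Z' ω ∈ I := hmem Z' hZu'
  -- independence for modifications
  have hIndep' : iIndepFun ![X', Y', Z'] P := by
    refine iIndepFun_congr' hIndep ?_
    intro i
    fin_cases i
    · exact hXX'
    · exact hYY'
    · exact hZZ'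
  -- event rewrite
  set S : Set (ℝ × ℝ) := {p : ℝ × ℝ | p.2 ≤ p.1} with hSdef
  have hSmeas : MeasurableSet S := measurableSet_le measurable_snd measurable_fst
  have hstep1 : P {ω | (⌊1 + X ω + ((R : ℝ) + h)⌋ : ℝ) + 1 + Z ω - (2 + Y ω) ≤ (R : ℝ)}
      = P ((fun ω => (Y' ω, Z' ω)) ⁻¹' S ∩ X' ⁻¹' Set.Iio (1 - h)) := by
    refine measure_congr (Filter.eventuallyEq_set.mpr ?_)
    filter_upwards [hXX', hYY', hZZ', haeX, haeY, haeZ] with ω h1 h2 h3 m1 m2 m3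
    simp only [Set.mem_setOf_eq, Set.mem_inter_iff, Set.mem_preimage, Set.mem_Iio, hSdef]
    rw [h1, h2, h3, key_iff R h _ _ _ hh0 hh1 m1 m2 m3]
    tauto
  rw [hstep1]
  -- independence split
  have hmv : ∀ i, Measurable (![X', Y', Z'] i) := by
    intro i; fin_cases i
    · exact hX'm
    · exact hY'm
    · exact hZ'm
  have hpair : IndepFun (fun ω => (Y' ω, Z' ω)) X' P := by
    have := hIndep'.indepFun_prodMk hmv 1 2 0 (by decide) (by decide)
    simpa using this
  rw [hpair.measure_inter_preimage_eq_mul S (Set.Iio (1 - h)) hSmeas measurableSet_Iio]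
  -- marginal for X'
  have hA : P (X' ⁻¹' Set.Iio (1 - h)) = ENNReal.ofReal (1 - h) / ENNReal.ofReal (1/2) := by
    rw [hXu'.measure_preimage hI0 hIt measurableSet_Iio, hIvol]
    congr 1
    have hset : I ∩ Set.Iio (1 - h) = Set.Ico 0 (1 - h) := by
      ext x
      simp only [hIdef, Set.mem_inter_iff, Set.mem_Icc, Set.mem_Iio, Set.mem_Ico]
      constructor
      · rintro ⟨⟨a, _⟩, c⟩; exact ⟨a, c⟩
      · rintro ⟨a, c⟩; exact ⟨⟨a, by linarith⟩, c⟩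
    rw [hset, Real.volume_Ico, sub_zero]
  -- the pair probability
  have hYZ : IndepFun Y' Z' P := by
    have := hIndep'.indepFun (i := 1) (j := 2) (μ := P) (by decide)
    simpa using this
  have hmapY : P.map Y' = volume[|I] := hYu'
  have hmapZ : P.map Z' = volume[|I] := hZu'
  haveI : IsProbabilityMeasure (volume[|I]) := cond_isProbabilityMeasure_of_finite hI0 hIt
  have hc : (ENNReal.ofReal ((1:ℝ)/2))⁻¹ = 2 := by
    rw [show ((1:ℝ)/2) = (2:ℝ)⁻¹ by norm_num, ENNReal.ofReal_inv_of_pos (by norm_num), inv_inv]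
    simp
  have hB : P ((fun ω => (Y' ω, Z' ω)) ⁻¹' S) = ENNReal.ofReal (1/2) := by
    rw [← Measure.map_apply (hY'm.prodMk hZ'm) hSmeas,
      (indepFun_iff_map_prod_eq_prod_map_map hY'm.aemeasurable hZ'm.aemeasurable).mp hYZ,
      hmapY, hmapZ, Measure.prod_apply hSmeas]
    have hslice : ∀ x : ℝ, (Prod.mk x ⁻¹' S) = Set.Iic x := by
      intro x; ext z; simp [hSdef]
    have hinner : ∀ x ∈ I, ((volume I)⁻¹ • volume.restrict I) (Set.Iic x)
        = (ENNReal.ofReal (1/2))⁻¹ * ENNReal.ofReal x := by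
      intro x hx
      rw [Measure.smul_apply, smul_eq_mul, Measure.restrict_apply measurableSet_Iic, hIvol]
      congr 1
      have hset : Set.Iic x ∩ I = Set.Icc 0 x := by
        ext z
        simp only [hIdef, Set.mem_inter_iff, Set.mem_Icc, Set.mem_Iic]
        obtain ⟨hx0, hx2⟩ := hx
        constructor
        · rintro ⟨c, a, _⟩; exact ⟨a, c⟩
        · rintro ⟨a, c⟩; exact ⟨c, a, by linarith⟩
      rw [hset, Real.volume_Icc, sub_zero]
    simp_rw [hslice]
    rw [ProbabilityTheory.cond, lintegral_smul_measure,
      setLIntegral_congr_fun measurableSet_Icc hinner,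
      lintegral_const_mul' _ _ (by rw [hc]; exact ENNReal.ofNat_ne_top),
      lint_piece, hIvol, hc]
    rw [(show ((2:ℝ≥0∞)) = ENNReal.ofReal 2 by simp), ← ENNReal.ofReal_mul (by norm_num),
      smul_eq_mul, ← ENNReal.ofReal_mul (by norm_num)]
    norm_num
  rw [hA, hB, ENNReal.mul_div_cancel (by positivity) ENNReal.ofReal_ne_top]
end
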